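/- Let P : (0,∞) → ℝ be positive and twice differentiable and satisfy the b = 3 similarity ODE P'' = (P')²/P - P'/Z + (3P³ + a)/Z - 1/P on Z > 0. Define new variables ζ = 4(Z/3)^{3/4} and w(ζ) = (Z/3)^{-1/4} P(Z) (with Z = 3(ζ/4)^{4/3}). Then w satisfies the Painlevé III equation d²w/dζ² = (1/w)(dw/dζ)² - (1/ζ)(dw/dζ) + (1/ζ)(α w² + β) + γ w³ + δ/w with α = 0, β = (4/3)a, γ = 1, δ = -1. -/

import Mathlib

/-- The `b = 3` similarity ODE transforms to Painlevé III with parameters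
`α = 0`, `β = 4a/3`, `γ = 1`, `δ = -1` under `w = (Z/3)^{-1/4} P`,
`ζ = 4(Z/3)^{3/4}` (i.e. `Z = 3(ζ/4)^{4/3}`). -/
theorem degasperis_procesi_to_painleve_iii (a : ℝ)
    (P : ℝ → ℝ)
    (hPdiff : ∀ Z : ℝ, 0 < Z → DifferentiableAt ℝ P Z)
    (hPdiff2 : ∀ Z : ℝ, 0 < Z → DifferentiableAt ℝ (deriv P) Z)
    (hPpos : ∀ Z : ℝ, 0 < Z → 0 < P Z)
    (hode : ∀ Z : ℝ, 0 < Z →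
      deriv (deriv P) Z =
        (deriv P Z) ^ 2 / P Z - deriv P Z / Z
          + (3 * (P Z) ^ 3 + a) / Z - 1 / P Z)
    (w : ℝ → ℝ)
    (hw : ∀ ζ : ℝ, 0 < ζ →
      w ζ = ((3 * (ζ / 4) ^ ((4 : ℝ) / 3)) / 3) ^ (-(1 : ℝ) / 4)
        * P (3 * (ζ / 4) ^ ((4 : ℝ) / 3))) :
    ∀ ζ : ℝ, 0 < ζ →
      deriv (deriv w) ζ =
        (deriv w ζ) ^ 2 / w ζ - deriv w ζ / ζ
          + ((0 : ℝ) * (w ζ) ^ 2 + (4 / 3) * a) / ζ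
          + 1 * (w ζ) ^ 3 + (-1) / w ζ := by
  -- notation
  set Zf : ℝ → ℝ := fun ζ => 3 * (ζ / 4) ^ ((4 : ℝ) / 3) with hZfdef
  have hZpos : ∀ ζ : ℝ, 0 < ζ → 0 < Zf ζ := by
    intro ζ hζ
    have : (0:ℝ) < (ζ/4) ^ ((4:ℝ)/3) := Real.rpow_pos_of_pos (by positivity) _
    simp only [hZfdef]; positivity
  -- w agrees with the explicit function g near any positive point
  have hwg : ∀ ζ : ℝ, 0 < ζ →
      w ζ = (ζ/4) ^ (-(1:ℝ)/3) * P (Zf ζ) := by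
    intro ζ hζ
    have hs : (0:ℝ) < ζ/4 := by positivity
    rw [hw ζ hζ, show (3 * (ζ/4) ^ ((4:ℝ)/3)) / 3 = (ζ/4) ^ ((4:ℝ)/3) by ring,
      ← Real.rpow_mul hs.le, show (4:ℝ)/3 * (-(1)/4) = -(1:ℝ)/3 by norm_num]
  -- derivative of Zf
  have hZd : ∀ ζ : ℝ, 0 < ζ → HasDerivAt Zf ((ζ/4) ^ ((1:ℝ)/3)) ζ := by
    intro ζ hζ
    have hs : (0:ℝ) < ζ/4 := by positivity
    have h1 : HasDerivAt (fun x : ℝ => x/4) (1/4) ζ := (hasDerivAt_id ζ).div_const 4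
    have h2 := (h1.rpow_const (p := (4:ℝ)/3) (Or.inl hs.ne'))
    have h3 := h2.const_mul (3:ℝ)
    refine h3.congr_deriv (Eq.symm ?_)
    rw [show (4:ℝ)/3 - 1 = (1:ℝ)/3 by norm_num]
    ring
  -- first derivative of w
  have key1 : ∀ ζ : ℝ, 0 < ζ →
      HasDerivAt w
        (deriv P (Zf ζ) - 1/12 * (ζ/4) ^ (-(4:ℝ)/3) * P (Zf ζ)) ζ := by
    intro ζ hζ
    have hs : (0:ℝ) < ζ/4 := by positivity
    have h1 : HasDerivAt (fun x : ℝ => x/4) (1/4) ζ := (hasDerivAt_id ζ).div_const 4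
    have hr1 : HasDerivAt (fun x : ℝ => (x/4) ^ (-(1:ℝ)/3))
        (-(1:ℝ)/3 * (ζ/4) ^ (-(1:ℝ)/3 - 1) * (1/4)) ζ := by
      have := h1.rpow_const (p := -(1:ℝ)/3) (Or.inl hs.ne')
      convert this using 1; ring
    have hPZ : HasDerivAt (fun x : ℝ => P (Zf x))
        (deriv P (Zf ζ) * (ζ/4) ^ ((1:ℝ)/3)) ζ := by
      have := ((hPdiff (Zf ζ) (hZpos ζ hζ)).hasDerivAt).comp ζ (hZd ζ hζ)
      exact this
    have hg := hr1.mul hPZ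
    have hev : w =ᶠ[nhds ζ] fun x => (x/4) ^ (-(1:ℝ)/3) * P (Zf x) :=
      Filter.eventuallyEq_of_mem (Ioi_mem_nhds hζ) (fun x hx => hwg x hx)
    have hwd := hg.congr_of_eventuallyEq hev
    refine hwd.congr_deriv (Eq.symm ?_)
    rw [show -(1:ℝ)/3 - 1 = -(4:ℝ)/3 by norm_num]
    have h11 : (ζ/4) ^ (-(1:ℝ)/3) * (ζ/4) ^ ((1:ℝ)/3) = 1 := by
      rw [← Real.rpow_add hs]; norm_num
    linear_combination (-deriv P (Zf ζ)) * h11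
  intro ζ0 hζ0
  have hs0 : (0:ℝ) < ζ0/4 := by positivity
  -- second derivative of w
  have hP2 : HasDerivAt (fun x : ℝ => deriv P (Zf x))
      (deriv (deriv P) (Zf ζ0) * (ζ0/4) ^ ((1:ℝ)/3)) ζ0 := by
    have := ((hPdiff2 (Zf ζ0) (hZpos ζ0 hζ0)).hasDerivAt).comp ζ0 (hZd ζ0 hζ0)
    exact this
  have h1 : HasDerivAt (fun x : ℝ => x/4) (1/4) ζ0 := (hasDerivAt_id ζ0).div_const 4
  have hr4 : HasDerivAt (fun x : ℝ => (x/4) ^ (-(4:ℝ)/3))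
      (-(4:ℝ)/3 * (ζ0/4) ^ (-(4:ℝ)/3 - 1) * (1/4)) ζ0 := by
    have := h1.rpow_const (p := -(4:ℝ)/3) (Or.inl hs0.ne')
    convert this using 1; ring
  have hPZ0 : HasDerivAt (fun x : ℝ => P (Zf x))
      (deriv P (Zf ζ0) * (ζ0/4) ^ ((1:ℝ)/3)) ζ0 := by
    have := ((hPdiff (Zf ζ0) (hZpos ζ0 hζ0)).hasDerivAt).comp ζ0 (hZd ζ0 hζ0)
    exact this
  have hW1 : HasDerivAt (fun x : ℝ => deriv P (Zf x) - 1/12 * (x/4) ^ (-(4:ℝ)/3) * P (Zf x))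
      (deriv (deriv P) (Zf ζ0) * (ζ0/4) ^ ((1:ℝ)/3)
        - ((1/12 * (-(4:ℝ)/3 * (ζ0/4) ^ (-(4:ℝ)/3 - 1) * (1/4))) * P (Zf ζ0)
            + (1/12 * (ζ0/4) ^ (-(4:ℝ)/3)) * (deriv P (Zf ζ0) * (ζ0/4) ^ ((1:ℝ)/3)))) ζ0 := by
    have := hP2.sub ((hr4.const_mul (1/12 : ℝ)).mul hPZ0)
    exact this
  have hev2 : deriv w =ᶠ[nhds ζ0]
      fun x => deriv P (Zf x) - 1/12 * (x/4) ^ (-(4:ℝ)/3) * P (Zf x) :=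
    Filter.eventuallyEq_of_mem (Ioi_mem_nhds hζ0) (fun x hx => (key1 x hx).deriv)
  have hd2 : deriv (deriv w) ζ0
      = deriv (deriv P) (Zf ζ0) * (ζ0/4) ^ ((1:ℝ)/3)
        - ((1/12 * (-(4:ℝ)/3 * (ζ0/4) ^ (-(4:ℝ)/3 - 1) * (1/4))) * P (Zf ζ0)
            + (1/12 * (ζ0/4) ^ (-(4:ℝ)/3)) * (deriv P (Zf ζ0) * (ζ0/4) ^ ((1:ℝ)/3))) := by
    rw [hev2.deriv_eq]; exact hW1.deriv
  -- express powers in terms of t = (ζ0/4)^(1/3)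
  set t : ℝ := (ζ0/4) ^ ((1:ℝ)/3) with htdef
  have ht : (0:ℝ) < t := Real.rpow_pos_of_pos hs0 _
  have e43 : (ζ0/4) ^ ((4:ℝ)/3) = t^4 := by
    rw [htdef, ← Real.rpow_natCast ((ζ0/4) ^ ((1:ℝ)/3)) 4, ← Real.rpow_mul hs0.le]
    norm_num
  have e73 : (ζ0/4) ^ ((7:ℝ)/3) = t^7 := by
    rw [htdef, ← Real.rpow_natCast ((ζ0/4) ^ ((1:ℝ)/3)) 7, ← Real.rpow_mul hs0.le]
    norm_num
  have em43 : (ζ0/4) ^ (-(4:ℝ)/3) = (t^4)⁻¹ := by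
    rw [show -(4:ℝ)/3 = -((4:ℝ)/3) by norm_num, Real.rpow_neg hs0.le, e43]
  have em73 : (ζ0/4) ^ (-(4:ℝ)/3 - 1) = (t^7)⁻¹ := by
    rw [show -(4:ℝ)/3 - 1 = -((7:ℝ)/3) by norm_num, Real.rpow_neg hs0.le, e73]
  have em13 : (ζ0/4) ^ (-(1:ℝ)/3) = t⁻¹ := by
    rw [show -(1:ℝ)/3 = -((1:ℝ)/3) by norm_num, Real.rpow_neg hs0.le, htdef]
  have e1 : ζ0 = 4 * t^3 := by
    rw [htdef, ← Real.rpow_natCast ((ζ0/4) ^ ((1:ℝ)/3)) 3, ← Real.rpow_mul hs0.le,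
      show (1:ℝ)/3 * (3:ℕ) = 1 by norm_num, Real.rpow_one]
    ring
  have hZt : Zf ζ0 = 3 * t^4 := by rw [hZfdef]; simp only []; rw [e43]
  have hppos : 0 < P (3 * t^4) := hPpos _ (by positivity)
  have hodet := hode (3 * t^4) (by positivity)
  have hwz : w ζ0 = t⁻¹ * P (3 * t^4) := by rw [hwg ζ0 hζ0, em13, hZt]
  have hdw : deriv w ζ0 = deriv P (3 * t^4) - 1/12 * (t^4)⁻¹ * P (3 * t^4) := by
    rw [(key1 ζ0 hζ0).deriv, em43, hZt]
  rw [hd2, hZt, em43, em73, hdw, hwz, hodet, e1]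
  have hpne : P (3 * t^4) ≠ 0 := hppos.ne'
  have htne : t ≠ 0 := ht.ne'
  field_simp
  ring
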